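/- arXiv:1404.5190 — 4 statements merged into one kernel-verified Lean document; each statement's English description precedes it below -/
import Mathlib

section
/- Let A be a dictionary with coherence μ < 1/(k−1) for an integer k > 1. Then the generalized coherence of degree k satisfies μ_k(A) ≤ kμ/(1 − (k−1)μ). -/
open Finset

/-- Generalized coherence of degree `k`: the supremum of `|⟨u,v⟩|` over unit vectors `u, v`
lying in the spans of two disjoint sets of at most `k` columns of `A`. -/
noncomputable def genCoherence {m N : ℕ} (A : Fin N → EuclideanSpace ℝ (Fin m)) (k : ℕ) : ℝ :=
  sSup {r : ℝ | ∃ I J : Finset (Fin N), I.card ≤ k ∧ J.card ≤ k ∧ Disjoint I J ∧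
    ∃ u ∈ Submodule.span ℝ (A '' I), ∃ v ∈ Submodule.span ℝ (A '' J),
      ‖u‖ = 1 ∧ ‖v‖ = 1 ∧ r = |(inner ℝ u v : ℝ)|}

/-- Cauchy–Schwarz for the ℓ¹/ℓ² norms on a finset of cardinality at most `k`. -/
lemma aux_l1_le_l2 {V : Type*} (S : Finset V) (f : V → ℝ) (k : ℕ) (hS : S.card ≤ k) :
    (∑ y ∈ S, |f y|) ^ 2 ≤ (k : ℝ) * ∑ y ∈ S, (f y) ^ 2 := by
  have h := Finset.sum_mul_sq_le_sq_mul_sq S (fun y => |f y|) (fun _ => (1 : ℝ))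
  simp only [mul_one, one_pow, sq_abs, Finset.sum_const, nsmul_eq_mul] at h
  calc (∑ y ∈ S, |f y|) ^ 2 ≤ (∑ y ∈ S, (f y) ^ 2) * S.card := h
    _ ≤ (∑ y ∈ S, (f y) ^ 2) * k := by
        apply mul_le_mul_of_nonneg_left (by exact_mod_cast hS)
        exact Finset.sum_nonneg fun y _ => sq_nonneg _
    _ = (k : ℝ) * ∑ y ∈ S, (f y) ^ 2 := mul_comm _ _

/-- Lower bound on the squared norm of a combination of nearly orthonormal vectors. -/
lemma aux_coef_bound {m : ℕ} (μ : ℝ) (hμ0 : 0 ≤ μ) (k : ℕ)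
    (S : Finset (EuclideanSpace ℝ (Fin m))) (hS : S.card ≤ k)
    (hnorm : ∀ y ∈ S, ‖y‖ = 1)
    (hpair : ∀ y ∈ S, ∀ z ∈ S, y ≠ z → |(inner ℝ y z : ℝ)| ≤ μ)
    (f : EuclideanSpace ℝ (Fin m) → ℝ) :
    (1 - ((k : ℝ) - 1) * μ) * ∑ y ∈ S, (f y) ^ 2 ≤ ‖∑ y ∈ S, f y • y‖ ^ 2 := by
  classical
  have hinner : (‖∑ y ∈ S, f y • y‖ : ℝ) ^ 2
      = ∑ y ∈ S, ∑ z ∈ S, f y * f z * (inner ℝ y z : ℝ) := by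
    rw [← real_inner_self_eq_norm_sq, sum_inner]
    refine Finset.sum_congr rfl fun y hy => ?_
    rw [inner_sum]
    refine Finset.sum_congr rfl fun z hz => ?_
    rw [real_inner_smul_left, real_inner_smul_right]; ring
  have hsplit : ∑ y ∈ S, ∑ z ∈ S, f y * f z * (inner ℝ y z : ℝ)
      = (∑ y ∈ S, (f y) ^ 2) + ∑ y ∈ S, ∑ z ∈ S.erase y, f y * f z * (inner ℝ y z : ℝ) := by
    rw [← Finset.sum_add_distrib]
    refine Finset.sum_congr rfl fun y hy => ?_
    rw [← Finset.add_sum_erase _ _ hy]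
    congr 1
    have : (inner ℝ y y : ℝ) = 1 := by
      rw [real_inner_self_eq_norm_sq, hnorm y hy]; norm_num
    rw [this]; ring
  have habs : |∑ y ∈ S, ∑ z ∈ S.erase y, f y * f z * (inner ℝ y z : ℝ)|
      ≤ μ * ((∑ y ∈ S, |f y|) ^ 2 - ∑ y ∈ S, (f y) ^ 2) := by
    calc |∑ y ∈ S, ∑ z ∈ S.erase y, f y * f z * (inner ℝ y z : ℝ)|
        ≤ ∑ y ∈ S, |∑ z ∈ S.erase y, f y * f z * (inner ℝ y z : ℝ)| :=
          Finset.abs_sum_le_sum_abs _ _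
      _ ≤ ∑ y ∈ S, ∑ z ∈ S.erase y, |f y * f z * (inner ℝ y z : ℝ)| :=
          Finset.sum_le_sum fun y _ => Finset.abs_sum_le_sum_abs _ _
      _ ≤ ∑ y ∈ S, ∑ z ∈ S.erase y, |f y| * |f z| * μ := by
          refine Finset.sum_le_sum fun y hy => Finset.sum_le_sum fun z hz => ?_
          rw [abs_mul, abs_mul]
          exact mul_le_mul_of_nonneg_left
            (hpair y hy z (Finset.mem_of_mem_erase hz) (Finset.ne_of_mem_erase hz).symm)
            (mul_nonneg (abs_nonneg _) (abs_nonneg _))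
      _ = μ * ((∑ y ∈ S, |f y|) ^ 2 - ∑ y ∈ S, (f y) ^ 2) := by
          have : ∑ y ∈ S, ∑ z ∈ S.erase y, |f y| * |f z| * μ
              = μ * ∑ y ∈ S, (|f y| * ∑ z ∈ S.erase y, |f z|) := by
            rw [Finset.mul_sum]
            refine Finset.sum_congr rfl fun y hy => ?_
            rw [Finset.mul_sum, Finset.mul_sum]
            exact Finset.sum_congr rfl fun z _ => by ring
          rw [this]
          congr 1
          have : ∀ y ∈ S, |f y| * ∑ z ∈ S.erase y, |f z|
              = |f y| * (∑ z ∈ S, |f z|) - (f y) ^ 2 := by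
            intro y hy
            rw [← Finset.add_sum_erase _ _ hy]
            rw [← sq_abs (f y)]; ring
          rw [Finset.sum_congr rfl this, Finset.sum_sub_distrib, ← Finset.sum_mul, sq]
  have hl1 := aux_l1_le_l2 S f k hS
  have hge : ∑ y ∈ S, ∑ z ∈ S.erase y, f y * f z * (inner ℝ y z : ℝ)
      ≥ -(((k : ℝ) - 1) * μ * ∑ y ∈ S, (f y) ^ 2) := by
    have h1 := neg_abs_le (∑ y ∈ S, ∑ z ∈ S.erase y, f y * f z * (inner ℝ y z : ℝ))
    have h2 : μ * ((∑ y ∈ S, |f y|) ^ 2 - ∑ y ∈ S, (f y) ^ 2)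
        ≤ ((k : ℝ) - 1) * μ * ∑ y ∈ S, (f y) ^ 2 := by
      have : (∑ y ∈ S, |f y|) ^ 2 - ∑ y ∈ S, (f y) ^ 2
          ≤ ((k : ℝ) - 1) * ∑ y ∈ S, (f y) ^ 2 := by nlinarith
      nlinarith
    linarith
  rw [hinner, hsplit]; linarith

/-- If the dictionary `A` has coherence `μ < 1/(k-1)` for an integer `k > 1`, then the
generalized coherence of degree `k` satisfies `μ_k(A) ≤ kμ/(1 - (k-1)μ)`. -/
theorem genCoherence_le {m N : ℕ} (A : Fin N → EuclideanSpace ℝ (Fin m)) (k : ℕ) (μ : ℝ)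
    (hk : 1 < k)
    (hunit : ∀ i, ‖A i‖ = 1)
    (hcoh : ∀ i j, i ≠ j → |(inner ℝ (A i) (A j) : ℝ)| ≤ μ)
    (hμ0 : 0 ≤ μ) (hμ : μ < 1 / ((k : ℝ) - 1)) :
    genCoherence A k ≤ (k : ℝ) * μ / (1 - ((k : ℝ) - 1) * μ) := by
  have hk1 : (0 : ℝ) < (k : ℝ) - 1 := by
    have : (1 : ℝ) < (k : ℝ) := by exact_mod_cast hk
    linarith
  have hD : 0 < 1 - ((k : ℝ) - 1) * μ := by
    have h := (lt_div_iff₀ hk1).mp hμ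
    nlinarith
  have hRHS : 0 ≤ (k : ℝ) * μ / (1 - ((k : ℝ) - 1) * μ) := by
    apply div_nonneg (mul_nonneg (by positivity) hμ0) hD.le
  apply Real.sSup_le _ hRHS
  rintro r ⟨I, J, hI, hJ, hIJ, u, hu, v, hv, hnu, hnv, rfl⟩
  classical
  -- rewrite spans as spans of image finsets
  have hSu : u ∈ Submodule.span ℝ ((I.image A : Finset _) : Set (EuclideanSpace ℝ (Fin m))) := by
    rwa [Finset.coe_image]
  have hSv : v ∈ Submodule.span ℝ ((J.image A : Finset _) : Set (EuclideanSpace ℝ (Fin m))) := by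
    rwa [Finset.coe_image]
  obtain ⟨f, -, hf⟩ := Submodule.mem_span_finset.mp hSu
  obtain ⟨g, -, hg⟩ := Submodule.mem_span_finset.mp hSv
  set S := I.image A with hSdef
  set T := J.image A with hTdef
  have hScard : S.card ≤ k := le_trans (Finset.card_image_le) hI
  have hTcard : T.card ≤ k := le_trans (Finset.card_image_le) hJ
  have hSnorm : ∀ y ∈ S, ‖y‖ = 1 := by
    rintro y hy; obtain ⟨i, _, rfl⟩ := Finset.mem_image.mp hy; exact hunit i
  have hTnorm : ∀ y ∈ T, ‖y‖ = 1 := by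
    rintro y hy; obtain ⟨i, _, rfl⟩ := Finset.mem_image.mp hy; exact hunit i
  have hSpair : ∀ y ∈ S, ∀ z ∈ S, y ≠ z → |(inner ℝ y z : ℝ)| ≤ μ := by
    rintro y hy z hz hne
    obtain ⟨i, _, rfl⟩ := Finset.mem_image.mp hy
    obtain ⟨j, _, rfl⟩ := Finset.mem_image.mp hz
    exact hcoh i j (fun h => hne (by rw [h]))
  have hTpair : ∀ y ∈ T, ∀ z ∈ T, y ≠ z → |(inner ℝ y z : ℝ)| ≤ μ := by
    rintro y hy z hz hne
    obtain ⟨i, _, rfl⟩ := Finset.mem_image.mp hy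
    obtain ⟨j, _, rfl⟩ := Finset.mem_image.mp hz
    exact hcoh i j (fun h => hne (by rw [h]))
  have hcross : ∀ y ∈ S, ∀ z ∈ T, |(inner ℝ y z : ℝ)| ≤ μ := by
    rintro y hy z hz
    obtain ⟨i, hi, rfl⟩ := Finset.mem_image.mp hy
    obtain ⟨j, hj, rfl⟩ := Finset.mem_image.mp hz
    exact hcoh i j (fun h => (Finset.disjoint_left.mp hIJ hi) (h ▸ hj))
  -- coefficient bounds
  have hfb : (1 - ((k : ℝ) - 1) * μ) * ∑ y ∈ S, (f y) ^ 2 ≤ 1 := by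
    have := aux_coef_bound μ hμ0 k S hScard hSnorm hSpair f
    rw [hf, hnu] at this; simpa using this
  have hgb : (1 - ((k : ℝ) - 1) * μ) * ∑ y ∈ T, (g y) ^ 2 ≤ 1 := by
    have := aux_coef_bound μ hμ0 k T hTcard hTnorm hTpair g
    rw [hg, hnv] at this; simpa using this
  have hf2 : ∑ y ∈ S, (f y) ^ 2 ≤ 1 / (1 - ((k : ℝ) - 1) * μ) :=
    (le_div_iff₀ hD).mpr (by linarith [hfb])
  have hg2 : ∑ y ∈ T, (g y) ^ 2 ≤ 1 / (1 - ((k : ℝ) - 1) * μ) :=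
    (le_div_iff₀ hD).mpr (by linarith [hgb])
  -- ℓ¹ bounds
  have hf1 : (∑ y ∈ S, |f y|) ^ 2 ≤ (k : ℝ) / (1 - ((k : ℝ) - 1) * μ) := by
    calc (∑ y ∈ S, |f y|) ^ 2 ≤ (k : ℝ) * ∑ y ∈ S, (f y) ^ 2 := aux_l1_le_l2 S f k hScard
      _ ≤ (k : ℝ) * (1 / (1 - ((k : ℝ) - 1) * μ)) :=
          mul_le_mul_of_nonneg_left hf2 (by positivity)
      _ = (k : ℝ) / (1 - ((k : ℝ) - 1) * μ) := by ring
  have hg1 : (∑ y ∈ T, |g y|) ^ 2 ≤ (k : ℝ) / (1 - ((k : ℝ) - 1) * μ) := by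
    calc (∑ y ∈ T, |g y|) ^ 2 ≤ (k : ℝ) * ∑ y ∈ T, (g y) ^ 2 := aux_l1_le_l2 T g k hTcard
      _ ≤ (k : ℝ) * (1 / (1 - ((k : ℝ) - 1) * μ)) :=
          mul_le_mul_of_nonneg_left hg2 (by positivity)
      _ = (k : ℝ) / (1 - ((k : ℝ) - 1) * μ) := by ring
  -- expand the inner product
  have hiv : (inner ℝ u v : ℝ) = ∑ y ∈ S, ∑ z ∈ T, f y * g z * (inner ℝ y z : ℝ) := by
    rw [← hf, ← hg, sum_inner]
    refine Finset.sum_congr rfl fun y hy => ?_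
    rw [inner_sum]
    refine Finset.sum_congr rfl fun z hz => ?_
    rw [real_inner_smul_left, real_inner_smul_right]; ring
  have hbound : |(inner ℝ u v : ℝ)| ≤ μ * ((∑ y ∈ S, |f y|) * (∑ z ∈ T, |g z|)) := by
    rw [hiv]
    calc |∑ y ∈ S, ∑ z ∈ T, f y * g z * (inner ℝ y z : ℝ)|
        ≤ ∑ y ∈ S, |∑ z ∈ T, f y * g z * (inner ℝ y z : ℝ)| := Finset.abs_sum_le_sum_abs _ _
      _ ≤ ∑ y ∈ S, ∑ z ∈ T, |f y * g z * (inner ℝ y z : ℝ)| :=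
          Finset.sum_le_sum fun y _ => Finset.abs_sum_le_sum_abs _ _
      _ ≤ ∑ y ∈ S, ∑ z ∈ T, |f y| * |g z| * μ := by
          refine Finset.sum_le_sum fun y hy => Finset.sum_le_sum fun z hz => ?_
          rw [abs_mul, abs_mul]
          exact mul_le_mul_of_nonneg_left (hcross y hy z hz)
            (mul_nonneg (abs_nonneg _) (abs_nonneg _))
      _ = μ * ((∑ y ∈ S, |f y|) * (∑ z ∈ T, |g z|)) := by
          rw [Finset.sum_mul_sum, Finset.mul_sum]
          refine Finset.sum_congr rfl fun y _ => ?_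
          rw [Finset.mul_sum]
          exact Finset.sum_congr rfl fun z _ => by ring
  have hprod : (∑ y ∈ S, |f y|) * (∑ z ∈ T, |g z|) ≤ (k : ℝ) / (1 - ((k : ℝ) - 1) * μ) := by
    have h1 : 0 ≤ ∑ y ∈ S, |f y| := Finset.sum_nonneg fun _ _ => abs_nonneg _
    have h2 : 0 ≤ ∑ z ∈ T, |g z| := Finset.sum_nonneg fun _ _ => abs_nonneg _
    have h3 : ((∑ y ∈ S, |f y|) * (∑ z ∈ T, |g z|)) ^ 2
        ≤ ((k : ℝ) / (1 - ((k : ℝ) - 1) * μ)) ^ 2 := by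
      rw [mul_pow]
      calc (∑ y ∈ S, |f y|) ^ 2 * (∑ z ∈ T, |g z|) ^ 2
          ≤ ((k : ℝ) / (1 - ((k : ℝ) - 1) * μ)) * ((k : ℝ) / (1 - ((k : ℝ) - 1) * μ)) :=
            mul_le_mul hf1 hg1 (sq_nonneg _) (by positivity)
        _ = ((k : ℝ) / (1 - ((k : ℝ) - 1) * μ)) ^ 2 := by ring
    nlinarith [h3, mul_nonneg h1 h2, div_nonneg (Nat.cast_nonneg k : (0:ℝ) ≤ k) hD.le]
  calc |(inner ℝ u v : ℝ)| ≤ μ * ((∑ y ∈ S, |f y|) * (∑ z ∈ T, |g z|)) := hbound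
    _ ≤ μ * ((k : ℝ) / (1 - ((k : ℝ) - 1) * μ)) := mul_le_mul_of_nonneg_left hprod hμ0
    _ = (k : ℝ) * μ / (1 - ((k : ℝ) - 1) * μ) := by ring
end

section
/- For any dictionary A and integer k > 1, the generalized coherence satisfies μ_k(A) ≤ (2k−1)·μ(A). -/
open Finset

lemma genCoh_span_coeff {m N : ℕ} (A : Fin N → EuclideanSpace ℝ (Fin m)) (I : Finset (Fin N))
    (u : EuclideanSpace ℝ (Fin m)) (hu : u ∈ Submodule.span ℝ (A '' I)) :
    ∃ a : Fin N → ℝ, u = ∑ i ∈ I, a i • A i := by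
  rw [Finsupp.mem_span_image_iff_linearCombination] at hu
  obtain ⟨l, hl, rfl⟩ := hu
  have hsub : l.support ⊆ I := fun i hi => by
    exact_mod_cast (Finsupp.mem_supported ℝ l).mp hl hi
  refine ⟨l, ?_⟩
  rw [Finsupp.linearCombination_apply, Finsupp.sum]
  exact Finset.sum_subset hsub (fun i _ hi => by
    rw [Finsupp.notMem_support_iff.mp hi, zero_smul])

lemma genCoh_inner_expand {m N : ℕ} (A : Fin N → EuclideanSpace ℝ (Fin m))
    (I J : Finset (Fin N)) (a b : Fin N → ℝ) :
    (inner ℝ (∑ i ∈ I, a i • A i) (∑ j ∈ J, b j • A j) : ℝ)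
      = ∑ i ∈ I, ∑ j ∈ J, a i * b j * (inner ℝ (A i) (A j) : ℝ) := by
  rw [sum_inner]
  refine Finset.sum_congr rfl fun i _ => ?_
  rw [inner_sum]
  refine Finset.sum_congr rfl fun j _ => ?_
  rw [real_inner_smul_left, real_inner_smul_right]; ring

lemma genCoh_quad_bound {m N : ℕ} (A : Fin N → EuclideanSpace ℝ (Fin m)) (k : ℕ) (μ : ℝ)
    (hunit : ∀ i, ‖A i‖ = 1)
    (hcoh : ∀ i j, i ≠ j → |(inner ℝ (A i) (A j) : ℝ)| ≤ μ)
    (hμ0 : 0 ≤ μ)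
    (I : Finset (Fin N)) (hI : I.card ≤ k) (a : Fin N → ℝ)
    (hnorm : ‖∑ i ∈ I, a i • A i‖ = 1) :
    (1 - ((k : ℝ) - 1) * μ) * ∑ i ∈ I, (a i)^2 ≤ 1 := by
  set g : Fin N → Fin N → ℝ := fun i j => (inner ℝ (A i) (A j) : ℝ) with hg
  set Q : ℝ := ∑ i ∈ I, (a i)^2 with hQ
  set S : ℝ := ∑ i ∈ I, |a i| with hS
  have hgii : ∀ i, g i i = 1 := fun i => by
    show (inner ℝ (A i) (A i) : ℝ) = 1
    rw [real_inner_self_eq_norm_sq, hunit, one_pow]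
  have expand : (1 : ℝ) = ∑ i ∈ I, ∑ j ∈ I, a i * a j * g i j := by
    have h := real_inner_self_eq_norm_sq (∑ i ∈ I, a i • A i)
    rw [hnorm, genCoh_inner_expand] at h
    simpa using h.symm
  have split : (1 : ℝ) = Q + ∑ i ∈ I, ∑ j ∈ I.erase i, a i * a j * g i j := by
    rw [expand, hQ, ← Finset.sum_add_distrib]
    refine Finset.sum_congr rfl fun i hi => ?_
    rw [← Finset.add_sum_erase _ _ hi, hgii]
    ring_nf
  have offd : ∑ i ∈ I, ∑ j ∈ I.erase i, a i * a j * g i j ≥ -(μ * (S^2 - Q)) := by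
    have h1 : ∀ i ∈ I, -(μ * (|a i| * (S - |a i|))) ≤
        ∑ j ∈ I.erase i, a i * a j * g i j := by
      intro i hi
      have h2 : ∑ j ∈ I.erase i, -(μ * (|a i| * |a j|)) ≤
          ∑ j ∈ I.erase i, a i * a j * g i j := by
        refine Finset.sum_le_sum fun j hj => ?_
        have hji : j ≠ i := Finset.ne_of_mem_erase hj
        have hb : |a i * a j * g i j| ≤ μ * (|a i| * |a j|) := by
          rw [abs_mul, abs_mul]
          have h3 := hcoh i j (Ne.symm hji)
          have h4 : |a i| * |a j| * |g i j| ≤ |a i| * |a j| * μ :=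
            mul_le_mul_of_nonneg_left h3 (by positivity)
          linarith
        linarith [neg_abs_le (a i * a j * g i j)]
      have h5 : ∑ j ∈ I.erase i, -(μ * (|a i| * |a j|)) =
          -(μ * (|a i| * (S - |a i|))) := by
        rw [Finset.sum_neg_distrib, ← Finset.mul_sum, ← Finset.mul_sum,
          Finset.sum_erase_eq_sub hi]
      linarith
    have h6 : ∑ i ∈ I, -(μ * (|a i| * (S - |a i|))) = -(μ * (S^2 - Q)) := by
      rw [Finset.sum_neg_distrib, ← Finset.mul_sum]
      congr 1
      congr 1
      have he : ∀ i ∈ I, |a i| * (S - |a i|) = |a i| * S - (a i)^2 := by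
        intro i _; rw [mul_sub, ← sq_abs (a i)]; ring
      rw [Finset.sum_congr rfl he, Finset.sum_sub_distrib, ← Finset.sum_mul, ← hS, ← hQ]
      ring
    calc ∑ i ∈ I, ∑ j ∈ I.erase i, a i * a j * g i j
        ≥ ∑ i ∈ I, -(μ * (|a i| * (S - |a i|))) := Finset.sum_le_sum h1
      _ = -(μ * (S^2 - Q)) := h6
  have hSk : S^2 ≤ (I.card : ℝ) * Q := by
    have := sq_sum_le_card_mul_sum_sq (s := I) (f := fun i => |a i|)
    simpa [sq_abs, ← hS, ← hQ] using this
  have hQ0 : 0 ≤ Q := Finset.sum_nonneg fun i _ => sq_nonneg _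
  have hIk : (I.card : ℝ) ≤ (k : ℝ) := by exact_mod_cast hI
  nlinarith [mul_le_mul_of_nonneg_left (sub_le_sub_right hSk Q) hμ0,
    mul_le_mul_of_nonneg_right (sub_le_sub_right hIk 1) hQ0,
    mul_le_mul_of_nonneg_left (mul_le_mul_of_nonneg_right (sub_le_sub_right hIk 1) hQ0) hμ0]

lemma genCoh_arith (kk μ Sa Sb Qa Qb : ℝ) (hk2 : 2 ≤ kk) (hμ0 : 0 ≤ μ)
    (hcase : (2*kk-1)*μ < 1)
    (hQau : (1-(kk-1)*μ)*Qa ≤ 1) (hQbv : (1-(kk-1)*μ)*Qb ≤ 1)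
    (hSka : Sa^2 ≤ kk*Qa) (hSkb : Sb^2 ≤ kk*Qb)
    (hSa0 : 0 ≤ Sa) (hSb0 : 0 ≤ Sb) (hQa0 : 0 ≤ Qa) (hQb0 : 0 ≤ Qb) :
    Sa * Sb ≤ 2*kk-1 := by
  set c : ℝ := 1 - (kk - 1) * μ with hc
  have hμ1 : (kk - 1) * μ ≤ (2*kk - 1) * μ := mul_le_mul_of_nonneg_right (by linarith) hμ0
  have hc0 : 0 < c := by rw [hc]; linarith
  have hkc : kk ≤ (2*kk - 1) * c := by
    rw [hc]
    have h7 : (kk - 1) * ((2*kk - 1) * μ) ≤ (kk - 1) * 1 :=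
      mul_le_mul_of_nonneg_left hcase.le (by linarith)
    nlinarith
  have e1 : (Sa * Sb)^2 ≤ (kk * Qa) * (kk * Qb) := by
    have h8 := mul_le_mul hSka hSkb (sq_nonneg Sb) (by positivity)
    nlinarith
  have e2 : (c * Qa) * (c * Qb) ≤ 1 := by
    have h9 := mul_le_mul hQau hQbv (by positivity) (by norm_num)
    linarith
  have e3 : kk^2 ≤ ((2*kk - 1) * c)^2 := by nlinarith
  have h1 : (c * (Sa * Sb))^2 ≤ ((2*kk - 1) * c)^2 := by
    have f1 := mul_le_mul_of_nonneg_left e1 (sq_nonneg c)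
    have f2 := mul_le_mul_of_nonneg_left e2 (sq_nonneg kk)
    nlinarith
  have h2 : c * (Sa * Sb) ≤ (2*kk - 1) * c := by
    have h10 : (0:ℝ) ≤ (2*kk - 1) * c := mul_nonneg (by linarith) hc0.le
    exact le_of_pow_le_pow_left₀ two_ne_zero h10 h1
  have h11 : c * (Sa * Sb) ≤ c * (2*kk - 1) := by linarith
  exact le_of_mul_le_mul_left h11 hc0

/-- For any dictionary `A` with coherence `μ` and integer `k > 1`, the generalized coherence
satisfies `μ_k(A) ≤ (2k - 1)·μ`. -/
theorem genCoherence_le_linear {m N : ℕ}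
    (A : Fin N → EuclideanSpace ℝ (Fin m)) (k : ℕ) (μ : ℝ)
    (hk : 1 < k)
    (hunit : ∀ i, ‖A i‖ = 1)
    (hcoh : ∀ i j, i ≠ j → |(inner ℝ (A i) (A j) : ℝ)| ≤ μ)
    (hμ0 : 0 ≤ μ) :
    genCoherence A k ≤ (2 * (k : ℝ) - 1) * μ := by
  have hk2 : (2 : ℝ) ≤ (k : ℝ) := by exact_mod_cast hk
  have hrhs0 : 0 ≤ (2 * (k : ℝ) - 1) * μ := by nlinarith
  refine Real.sSup_le ?_ hrhs0
  rintro r ⟨I, J, hI, hJ, hIJ, u, hu, v, hv, hun, hvn, rfl⟩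
  by_cases hcase : 1 ≤ (2 * (k : ℝ) - 1) * μ
  · calc |(inner ℝ u v : ℝ)| ≤ ‖u‖ * ‖v‖ := abs_real_inner_le_norm u v
      _ = 1 := by rw [hun, hvn, mul_one]
      _ ≤ _ := hcase
  · push_neg at hcase
    obtain ⟨a, hau⟩ := genCoh_span_coeff A I u hu
    obtain ⟨b, hbv⟩ := genCoh_span_coeff A J v hv
    set Sa : ℝ := ∑ i ∈ I, |a i| with hSa
    set Sb : ℝ := ∑ j ∈ J, |b j| with hSb
    set Qa : ℝ := ∑ i ∈ I, (a i)^2 with hQa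
    set Qb : ℝ := ∑ j ∈ J, (b j)^2 with hQb
    have hSa0 : 0 ≤ Sa := Finset.sum_nonneg fun i _ => abs_nonneg _
    have hSb0 : 0 ≤ Sb := Finset.sum_nonneg fun i _ => abs_nonneg _
    have hQa0 : 0 ≤ Qa := Finset.sum_nonneg fun i _ => sq_nonneg _
    have hQb0 : 0 ≤ Qb := Finset.sum_nonneg fun i _ => sq_nonneg _
    -- inner product bound
    have hinner : |(inner ℝ u v : ℝ)| ≤ μ * (Sa * Sb) := by
      rw [hau, hbv, genCoh_inner_expand]
      calc |∑ i ∈ I, ∑ j ∈ J, a i * b j * (inner ℝ (A i) (A j) : ℝ)|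
          ≤ ∑ i ∈ I, |∑ j ∈ J, a i * b j * (inner ℝ (A i) (A j) : ℝ)| :=
            Finset.abs_sum_le_sum_abs _ _
        _ ≤ ∑ i ∈ I, ∑ j ∈ J, |a i * b j * (inner ℝ (A i) (A j) : ℝ)| :=
            Finset.sum_le_sum fun i _ => Finset.abs_sum_le_sum_abs _ _
        _ ≤ ∑ i ∈ I, ∑ j ∈ J, μ * (|a i| * |b j|) := by
            refine Finset.sum_le_sum fun i hi => Finset.sum_le_sum fun j hj => ?_
            have hij : i ≠ j := fun h => (Finset.disjoint_left.mp hIJ hi (h ▸ hj))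
            rw [abs_mul, abs_mul]
            have h4 : |a i| * |b j| * |(inner ℝ (A i) (A j) : ℝ)| ≤ |a i| * |b j| * μ :=
              mul_le_mul_of_nonneg_left (hcoh i j hij) (by positivity)
            linarith
        _ = μ * (Sa * Sb) := by
            rw [hSa, hSb, Finset.sum_mul_sum, Finset.mul_sum]
            refine Finset.sum_congr rfl fun i _ => ?_
            rw [Finset.mul_sum]
    -- quadratic bounds
    have hQau : (1 - ((k : ℝ) - 1) * μ) * Qa ≤ 1 :=
      genCoh_quad_bound A k μ hunit hcoh hμ0 I hI a (hau ▸ hun)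
    have hQbv : (1 - ((k : ℝ) - 1) * μ) * Qb ≤ 1 :=
      genCoh_quad_bound A k μ hunit hcoh hμ0 J hJ b (hbv ▸ hvn)
    have hSka : Sa^2 ≤ (k : ℝ) * Qa := by
      have h := sq_sum_le_card_mul_sum_sq (s := I) (f := fun i => |a i|)
      have hIk : (I.card : ℝ) ≤ (k : ℝ) := by exact_mod_cast hI
      have h2 : (I.card : ℝ) * Qa ≤ (k : ℝ) * Qa := mul_le_mul_of_nonneg_right hIk hQa0
      calc Sa^2 ≤ (I.card : ℝ) * Qa := by simpa [sq_abs, ← hSa, ← hQa] using h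
        _ ≤ (k : ℝ) * Qa := h2
    have hSkb : Sb^2 ≤ (k : ℝ) * Qb := by
      have h := sq_sum_le_card_mul_sum_sq (s := J) (f := fun j => |b j|)
      have hJk : (J.card : ℝ) ≤ (k : ℝ) := by exact_mod_cast hJ
      have h2 : (J.card : ℝ) * Qb ≤ (k : ℝ) * Qb := mul_le_mul_of_nonneg_right hJk hQb0
      calc Sb^2 ≤ (J.card : ℝ) * Qb := by simpa [sq_abs, ← hSb, ← hQb] using h
        _ ≤ (k : ℝ) * Qb := h2
    have hSS : Sa * Sb ≤ 2 * (k : ℝ) - 1 :=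
      genCoh_arith (k : ℝ) μ Sa Sb Qa Qb hk2 hμ0 hcase hQau hQbv hSka hSkb
        hSa0 hSb0 hQa0 hQb0
    calc |(inner ℝ u v : ℝ)| ≤ μ * (Sa * Sb) := hinner
      _ ≤ μ * (2 * (k : ℝ) - 1) := mul_le_mul_of_nonneg_left hSS hμ0
      _ = (2 * (k : ℝ) - 1) * μ := mul_comm _ _
end

section
/- For a fixed dictionary A, the generalized coherence μ_k(A) is non-decreasing in k, and μ_k(A) = 1 if and only if k ≥ ⌈spark(A)/2⌉. -/
/-- The spark of a dictionary: the smallest number of linearly dependent columns. -/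
noncomputable def spark {m N : ℕ} (A : Fin N → EuclideanSpace ℝ (Fin m)) : ℕ :=
  sInf {s : ℕ | ∃ S : Finset (Fin N), S.card = s ∧
    ¬ LinearIndependent ℝ (fun i : S => A i)}

section Aux

variable {m N : ℕ} {A : Fin N → EuclideanSpace ℝ (Fin m)}

/-- The set whose supremum is the generalized coherence. -/
def cohSet (A : Fin N → EuclideanSpace ℝ (Fin m)) (k : ℕ) : Set ℝ :=
  {r : ℝ | ∃ I J : Finset (Fin N), I.card ≤ k ∧ J.card ≤ k ∧ Disjoint I J ∧
    ∃ u ∈ Submodule.span ℝ (A '' I), ∃ v ∈ Submodule.span ℝ (A '' J),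
      ‖u‖ = 1 ∧ ‖v‖ = 1 ∧ r = |(inner ℝ u v : ℝ)|}

lemma genCoherence_eq (k : ℕ) : genCoherence A k = sSup (cohSet A k) := rfl

lemma cohSet_subset_Icc (k : ℕ) : cohSet A k ⊆ Set.Icc (0 : ℝ) 1 := by
  rintro r ⟨I, J, hI, hJ, hd, u, hu, v, hv, hnu, hnv, rfl⟩
  refine ⟨abs_nonneg _, ?_⟩
  calc |(inner ℝ u v : ℝ)| ≤ ‖u‖ * ‖v‖ := abs_real_inner_le_norm u v
    _ = 1 := by rw [hnu, hnv, mul_one]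

lemma cohSet_bddAbove (k : ℕ) : BddAbove (cohSet A k) :=
  ⟨1, fun _ hx => (cohSet_subset_Icc k hx).2⟩

lemma cohSet_mono {k k' : ℕ} (h : k ≤ k') : cohSet A k ⊆ cohSet A k' := by
  rintro r ⟨I, J, hI, hJ, hrest⟩
  exact ⟨I, J, hI.trans h, hJ.trans h, hrest⟩

lemma combo_of_dep {S : Finset (Fin N)}
    (h : ¬ LinearIndependent ℝ (fun i : S => A i)) :
    ∃ c : Fin N → ℝ, (∑ i ∈ S, c i • A i) = 0 ∧ ∃ i0 ∈ S, c i0 ≠ 0 := by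
  obtain ⟨g, hg, i, hi⟩ := Fintype.not_linearIndependent_iff.1 h
  refine ⟨fun j => if h : j ∈ S then g ⟨j, h⟩ else 0, ?_, i, i.2, by simpa using hi⟩
  rw [← Finset.sum_coe_sort S, ← hg]
  exact Finset.sum_congr rfl fun j _ => by simp [j.2]

lemma dep_of_combo {S : Finset (Fin N)} {c : Fin N → ℝ}
    (hsum : (∑ i ∈ S, c i • A i) = 0) {i0 : Fin N} (hi0 : i0 ∈ S) (hc : c i0 ≠ 0) :
    ¬ LinearIndependent ℝ (fun i : S => A i) := by
  refine Fintype.not_linearIndependent_iff.2 ⟨fun i => c i, ?_, ⟨i0, hi0⟩, hc⟩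
  rw [Finset.sum_coe_sort S (fun j => c j • A j)]
  exact hsum

lemma sum_mem_span (S : Finset (Fin N)) (c : Fin N → ℝ) :
    (∑ i ∈ S, c i • A i) ∈ Submodule.span ℝ (A '' S) :=
  Submodule.sum_mem _ fun i hi => Submodule.smul_mem _ _
    (Submodule.subset_span ⟨i, Finset.mem_coe.2 hi, rfl⟩)

lemma sparkSet_nonempty (hdep : ¬ LinearIndependent ℝ A) :
    {s : ℕ | ∃ S : Finset (Fin N), S.card = s ∧
      ¬ LinearIndependent ℝ (fun i : S => A i)}.Nonempty := by
  refine ⟨(Finset.univ : Finset (Fin N)).card, Finset.univ, rfl, fun h => hdep ?_⟩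
  have := h.comp (fun i : Fin N => (⟨i, Finset.mem_univ i⟩ : (Finset.univ : Finset (Fin N))))
    (fun a b hab => by simpa using congrArg Subtype.val hab)
  exact this

lemma two_le_spark (hunit : ∀ i, ‖A i‖ = 1) (hdep : ¬ LinearIndependent ℝ A) :
    2 ≤ spark A := by
  obtain ⟨S, hcard, hS⟩ := Nat.sInf_mem (sparkSet_nonempty hdep)
  by_contra hlt
  push_neg at hlt
  obtain ⟨c, hsum, i0, hi0, hc⟩ := combo_of_dep hS
  have hS1 : S.card ≤ 1 := by unfold spark at hlt; omega
  have hSi : S = {i0} :=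
    Finset.eq_singleton_iff_unique_mem.2
      ⟨hi0, fun j hj => Finset.card_le_one.1 hS1 j hj i0 hi0⟩
  rw [hSi, Finset.sum_singleton] at hsum
  have hA0 : A i0 = 0 := by
    rcases smul_eq_zero.1 hsum with h | h
    · exact absurd h hc
    · exact h
  have := hunit i0
  rw [hA0, norm_zero] at this
  norm_num at this

lemma isCompact_cohSet (k : ℕ) : IsCompact (cohSet A k) := by
  have hrw : cohSet A k = ⋃ p : Finset (Fin N) × Finset (Fin N),
      {r : ℝ | p.1.card ≤ k ∧ p.2.card ≤ k ∧ Disjoint p.1 p.2 ∧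
        ∃ u ∈ Submodule.span ℝ (A '' p.1), ∃ v ∈ Submodule.span ℝ (A '' p.2),
          ‖u‖ = 1 ∧ ‖v‖ = 1 ∧ r = |(inner ℝ u v : ℝ)|} := by
    ext r
    simp only [Set.mem_iUnion, cohSet, Set.mem_setOf_eq, Prod.exists]
  rw [hrw]
  apply isCompact_iUnion
  intro p
  by_cases hcond : p.1.card ≤ k ∧ p.2.card ≤ k ∧ Disjoint p.1 p.2
  · obtain ⟨h1, h2, h3⟩ := hcond
    have himg : {r : ℝ | p.1.card ≤ k ∧ p.2.card ≤ k ∧ Disjoint p.1 p.2 ∧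
        ∃ u ∈ Submodule.span ℝ (A '' p.1), ∃ v ∈ Submodule.span ℝ (A '' p.2),
          ‖u‖ = 1 ∧ ‖v‖ = 1 ∧ r = |(inner ℝ u v : ℝ)|}
        = (fun uv : EuclideanSpace ℝ (Fin m) × EuclideanSpace ℝ (Fin m) =>
            |(inner ℝ uv.1 uv.2 : ℝ)|) ''
          ((Metric.sphere (0 : EuclideanSpace ℝ (Fin m)) 1 ∩
              (Submodule.span ℝ (A '' p.1) : Set (EuclideanSpace ℝ (Fin m)))) ×ˢ
           (Metric.sphere (0 : EuclideanSpace ℝ (Fin m)) 1 ∩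
              (Submodule.span ℝ (A '' p.2) : Set (EuclideanSpace ℝ (Fin m))))) := by
      ext r
      simp only [Set.mem_setOf_eq, Set.mem_image, Set.mem_prod, Set.mem_inter_iff,
        mem_sphere_zero_iff_norm, SetLike.mem_coe, Prod.exists, h1, h2, h3, true_and]
      constructor
      · rintro ⟨u, hu, v, hv, hnu, hnv, rfl⟩
        exact ⟨u, v, ⟨⟨hnu, hu⟩, ⟨hnv, hv⟩⟩, rfl⟩
      · rintro ⟨u, v, ⟨⟨hnu, hu⟩, ⟨hnv, hv⟩⟩, rfl⟩
        exact ⟨u, hu, v, hv, hnu, hnv, rfl⟩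
    rw [himg]
    apply IsCompact.image
    · exact ((isCompact_sphere _ _).inter_right
        (Submodule.span ℝ (A '' p.1)).closed_of_finiteDimensional).prod
        ((isCompact_sphere _ _).inter_right
          (Submodule.span ℝ (A '' p.2)).closed_of_finiteDimensional)
    · exact continuous_abs.comp continuous_inner
  · convert isCompact_empty
    ext r
    simp only [Set.mem_setOf_eq, Set.mem_empty_iff_false, iff_false]
    intro h
    exact hcond ⟨h.1, h.2.1, h.2.2.1⟩

lemma one_mem_cohSet (hunit : ∀ i, ‖A i‖ = 1) (hdep : ¬ LinearIndependent ℝ A)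
    {k : ℕ} (hk : 1 ≤ k) (hsk : spark A ≤ 2 * k) : (1 : ℝ) ∈ cohSet A k := by
  obtain ⟨S, hcard, hS⟩ := Nat.sInf_mem (sparkSet_nonempty hdep)
  obtain ⟨c, hsum, i0, hi0, hc⟩ := combo_of_dep hS
  have h2 : 2 ≤ spark A := two_le_spark hunit hdep
  have hcardS : S.card = spark A := hcard
  have h1t : 1 ≤ max 1 (spark A - k) := le_max_left _ _
  have hskt : spark A - k ≤ max 1 (spark A - k) := le_max_right _ _
  have htk : max 1 (spark A - k) ≤ k := max_le hk (by omega)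
  have hlt : max 1 (spark A - k) < spark A := max_lt (by omega) (by omega)
  obtain ⟨I, hI0, hIS, hIcard⟩ := Finset.exists_subsuperset_card_eq
    (n := max 1 (spark A - k)) (Finset.singleton_subset_iff.2 hi0) (by simp)
    (by rw [hcardS]; exact le_of_lt hlt)
  have hi0I : i0 ∈ I := Finset.singleton_subset_iff.1 hI0
  have hu0 : (∑ i ∈ I, c i • A i) ≠ 0 := by
    intro h
    have hdepI := dep_of_combo h hi0I hc
    have : spark A ≤ max 1 (spark A - k) := Nat.sInf_le ⟨I, hIcard, hdepI⟩
    omega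
  have hJcard : (S \ I).card = spark A - max 1 (spark A - k) := by
    rw [Finset.card_sdiff_of_subset hIS, hIcard, hcardS]
  have hsd : (∑ i ∈ S \ I, c i • A i) + (∑ i ∈ I, c i • A i) = 0 := by
    rw [Finset.sum_sdiff hIS]; exact hsum
  have huneg : (∑ i ∈ I, c i • A i) = -(∑ i ∈ S \ I, c i • A i) := by
    rw [eq_neg_iff_add_eq_zero, add_comm]; exact hsd
  have hnorm : ‖∑ i ∈ I, c i • A i‖ ≠ 0 := norm_ne_zero_iff.2 hu0
  have hnw : ‖(‖∑ i ∈ I, c i • A i‖⁻¹ • ∑ i ∈ I, c i • A i : EuclideanSpace ℝ (Fin m))‖ = 1 := by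
    rw [norm_smul, norm_inv, norm_norm, inv_mul_cancel₀ hnorm]
  refine ⟨I, S \ I, hIcard ▸ htk, by omega, Finset.disjoint_sdiff,
    ‖∑ i ∈ I, c i • A i‖⁻¹ • ∑ i ∈ I, c i • A i,
    Submodule.smul_mem _ _ (sum_mem_span I c),
    ‖∑ i ∈ I, c i • A i‖⁻¹ • ∑ i ∈ I, c i • A i, ?_, hnw, hnw, ?_⟩
  · rw [huneg]
    exact Submodule.smul_mem _ _ (Submodule.neg_mem _ (sum_mem_span (S \ I) c))
  · rw [real_inner_self_eq_norm_sq, hnw]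
    norm_num

end Aux

/-- For a fixed dictionary `A` (whose columns are unit vectors and linearly dependent, so
that the spark is finite), the generalized coherence `μ_k(A)` is non-decreasing in `k`, and
`μ_k(A) = 1` if and only if `k ≥ ⌈spark(A)/2⌉`. -/
theorem genCoherence_monotone_and_spark {m N : ℕ}
    (A : Fin N → EuclideanSpace ℝ (Fin m))
    (hunit : ∀ i, ‖A i‖ = 1)
    (hdep : ¬ LinearIndependent ℝ A) :
    (∀ k k' : ℕ, k ≤ k' → genCoherence A k ≤ genCoherence A k') ∧
    (∀ k : ℕ, 1 ≤ k → (genCoherence A k = 1 ↔ ⌈((spark A : ℝ) / 2 : ℝ)⌉ ≤ (k : ℤ))) := by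
  constructor
  · intro k k' hkk'
    rw [genCoherence_eq, genCoherence_eq]
    by_cases hne : (cohSet A k).Nonempty
    · exact csSup_le_csSup (cohSet_bddAbove k') hne (cohSet_mono hkk')
    · rw [Set.not_nonempty_iff_eq_empty.1 hne, Real.sSup_empty]
      exact Real.sSup_nonneg fun x hx => (cohSet_subset_Icc k' hx).1
  · intro k hk
    constructor
    · -- genCoherence = 1 → spark ≤ 2k
      intro h1
      rw [genCoherence_eq] at h1
      have hne : (cohSet A k).Nonempty := by
        by_contra hne
        rw [Set.not_nonempty_iff_eq_empty.1 hne, Real.sSup_empty] at h1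
        norm_num at h1
      have hmem : (1 : ℝ) ∈ cohSet A k := h1 ▸ (isCompact_cohSet k).sSup_mem hne
      obtain ⟨I, J, hI, hJ, hd, u, hu, v, hv, hnu, hnv, hr⟩ := hmem
      -- equality in Cauchy-Schwarz: u = v or u = -v
      have huJ : u ∈ Submodule.span ℝ (A '' J) := by
        rcases abs_eq (by norm_num : (0:ℝ) ≤ 1) |>.1 hr.symm with h | h
        · have : (inner ℝ u v : ℝ) = ‖u‖ * ‖v‖ := by rw [hnu, hnv, mul_one]; exact h
          have huv : ‖v‖ • u = ‖u‖ • v := inner_eq_norm_mul_iff_real.1 this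
          rw [hnu, hnv, one_smul, one_smul] at huv
          rw [huv]; exact hv
        · have : (inner ℝ u (-v) : ℝ) = ‖u‖ * ‖-v‖ := by
            rw [inner_neg_right, h, hnu, norm_neg, hnv, mul_one]; norm_num
          have huv : ‖-v‖ • u = ‖u‖ • (-v) := inner_eq_norm_mul_iff_real.1 this
          rw [hnu, norm_neg, hnv, one_smul, one_smul] at huv
          rw [huv]; exact Submodule.neg_mem _ hv
      have hu0 : u ≠ 0 := by
        intro h; rw [h, norm_zero] at hnu; norm_num at hnu
      -- representations
      rw [Set.image_eq_range A (↑I : Set (Fin N))] at hu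
      rw [Set.image_eq_range A (↑J : Set (Fin N))] at huJ
      obtain ⟨a, ha⟩ := (Submodule.mem_span_range_iff_exists_fun ℝ).1 hu
      obtain ⟨b, hb⟩ := (Submodule.mem_span_range_iff_exists_fun ℝ).1 huJ
      set cc : Fin N → ℝ := fun i =>
        (if h : i ∈ I then a ⟨i, h⟩ else 0) - (if h : i ∈ J then b ⟨i, h⟩ else 0) with hcc
      have hsumI : ∑ i ∈ I, cc i • A i = u := by
        rw [← Finset.sum_coe_sort I, ← ha]
        refine Finset.sum_congr rfl fun i _ => ?_
        have hiJ : (i : Fin N) ∉ J := Finset.disjoint_left.1 hd i.2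
        simp [hcc, i.2, hiJ]
      have hsumJ : ∑ i ∈ J, cc i • A i = -u := by
        rw [← Finset.sum_coe_sort J, ← hb]
        rw [← Finset.sum_neg_distrib]
        refine Finset.sum_congr rfl fun i _ => ?_
        have hiI : (i : Fin N) ∉ I := Finset.disjoint_right.1 hd i.2
        simp [hcc, i.2, hiI]
      have hsum : ∑ i ∈ I ∪ J, cc i • A i = 0 := by
        rw [Finset.sum_union hd, hsumI, hsumJ, add_neg_cancel]
      have hdepIJ : ¬ LinearIndependent ℝ (fun i : (I ∪ J : Finset (Fin N)) => A i) := by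
        intro hli
        have hz := Fintype.linearIndependent_iff.1 hli (fun i => cc i)
          (by rw [Finset.sum_coe_sort (I ∪ J) (fun j => cc j • A j)]; exact hsum)
        have : u = 0 := by
          rw [← hsumI]
          refine Finset.sum_eq_zero fun i hi => ?_
          have hzi : cc i = 0 := hz ⟨i, Finset.mem_union_left J hi⟩
          rw [hzi, zero_smul]
        exact hu0 this
      have hsp : spark A ≤ (I ∪ J).card := Nat.sInf_le ⟨I ∪ J, rfl, hdepIJ⟩
      have hcard : (I ∪ J).card ≤ 2 * k :=
        le_trans (Finset.card_union_le I J) (by omega)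
      have hs2k : spark A ≤ 2 * k := le_trans hsp hcard
      rw [Int.ceil_le]
      have : (spark A : ℝ) ≤ 2 * k := by exact_mod_cast hs2k
      push_cast
      linarith
    · -- spark ≤ 2k → genCoherence = 1
      intro hceil
      have hs2k : spark A ≤ 2 * k := by
        rw [Int.ceil_le] at hceil
        have : (spark A : ℝ) ≤ 2 * k := by
          have := hceil
          push_cast at this
          linarith
        exact_mod_cast this
      have hmem := one_mem_cohSet hunit hdep hk hs2k
      rw [genCoherence_eq]
      refine le_antisymm ?_ (le_csSup (cohSet_bddAbove k) hmem)
      exact csSup_le ⟨1, hmem⟩ fun x hx => (cohSet_subset_Icc k hx).2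
end

section
/- For every integer k > 1 and real 0 ≤ u < 1/(k−1), there exists a dictionary A with coherence exactly u and generalized coherence μ_k(A) = min(ku/(1−(k−1)u), 1). In particular, the bound μ_k ≤ kμ/(1−(k−1)μ) is tight. -/
open Finset in
/-- Representation of a span element as a combination over the finset. -/
lemma span_image_rep {E : Type*} [AddCommGroup E] [Module ℝ E] {ι : Type*} [DecidableEq ι]
    {A : ι → E} {I : Finset ι} {w : E} (hw : w ∈ Submodule.span ℝ (A '' ↑I)) :
    ∃ x : ι → ℝ, w = ∑ i ∈ I, x i • A i := by
  rw [Finsupp.mem_span_image_iff_linearCombination] at hw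
  obtain ⟨l, hsupp, rfl⟩ := hw
  refine ⟨l, ?_⟩
  rw [Finsupp.linearCombination_apply, Finsupp.sum]
  refine Finset.sum_subset ?_ ?_
  · exact Finset.coe_subset.mp (by exact_mod_cast (Finsupp.mem_supported ℝ l).mp hsupp)
  · intro i _ hi
    rw [Finsupp.notMem_support_iff.mp hi, zero_smul]

/-- ℓ¹ bound for coefficients of a unit vector. -/
lemma l1_sq_bound {E : Type*} [NormedAddCommGroup E] [InnerProductSpace ℝ E]
    {ι : Type*} [DecidableEq ι] (I : Finset ι) (a : ι → E) (x : ι → ℝ) (μ : ℝ) (k : ℕ)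
    (hμ : 0 ≤ μ) (hk1 : (1:ℝ) ≤ k) (hcard : I.card ≤ k) (hC : 0 < 1 - ((k:ℝ) - 1) * μ)
    (hn : ∀ i ∈ I, ‖a i‖ = 1)
    (hcoh : ∀ i ∈ I, ∀ j ∈ I, i ≠ j → |(inner ℝ (a i) (a j) : ℝ)| ≤ μ)
    (hu : ‖∑ i ∈ I, x i • a i‖ = 1) :
    (∑ i ∈ I, |x i|) ^ 2 ≤ (k : ℝ) / (1 - ((k:ℝ) - 1) * μ) := by
  set S := ∑ i ∈ I, |x i| with hS
  set Q := ∑ i ∈ I, x i ^ 2 with hQ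
  have hexp : (1:ℝ) = ∑ i ∈ I, ∑ j ∈ I, x i * x j * (inner ℝ (a i) (a j) : ℝ) := by
    have h0 : (inner ℝ (∑ i ∈ I, x i • a i) (∑ i ∈ I, x i • a i) : ℝ)
        = ∑ i ∈ I, ∑ j ∈ I, x i * x j * (inner ℝ (a i) (a j) : ℝ) := by
      rw [sum_inner]
      refine Finset.sum_congr rfl fun i _ => ?_
      rw [inner_sum]
      refine Finset.sum_congr rfl fun j _ => ?_
      rw [real_inner_smul_left, real_inner_smul_right]; ring
    rw [← h0, real_inner_self_eq_norm_sq, hu, one_pow]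
  have hrows : ∀ i ∈ I, x i ^ 2 - μ * (|x i| * (S - |x i|))
      ≤ ∑ j ∈ I, x i * x j * (inner ℝ (a i) (a j) : ℝ) := by
    intro i hi
    have hsplit : ∑ j ∈ I, x i * x j * (inner ℝ (a i) (a j) : ℝ)
        = x i * x i * (inner ℝ (a i) (a i) : ℝ)
          + ∑ j ∈ I.erase i, x i * x j * (inner ℝ (a i) (a j) : ℝ) :=
      (Finset.add_sum_erase _ _ hi).symm
    have hself : (inner ℝ (a i) (a i) : ℝ) = 1 := by
      rw [real_inner_self_eq_norm_sq, hn i hi]; norm_num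
    have herase : -(μ * (|x i| * (S - |x i|)))
        ≤ ∑ j ∈ I.erase i, x i * x j * (inner ℝ (a i) (a j) : ℝ) := by
      have hterm : ∀ j ∈ I.erase i, -(μ * (|x i| * |x j|)) ≤ x i * x j * (inner ℝ (a i) (a j) : ℝ) := by
        intro j hj
        have hji : j ≠ i := Finset.ne_of_mem_erase hj
        have hjI : j ∈ I := Finset.mem_of_mem_erase hj
        have habs : |x i * x j * (inner ℝ (a i) (a j) : ℝ)| ≤ μ * (|x i| * |x j|) := by
          rw [abs_mul, abs_mul]
          calc |x i| * |x j| * |(inner ℝ (a i) (a j) : ℝ)|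
              ≤ |x i| * |x j| * μ := by
                exact mul_le_mul_of_nonneg_left (hcoh i hi j hjI (Ne.symm hji)) (by positivity)
            _ = μ * (|x i| * |x j|) := by ring
        linarith [neg_abs_le (x i * x j * (inner ℝ (a i) (a j) : ℝ))]
      have hers : ∑ j ∈ I.erase i, |x j| = S - |x i| := by
        rw [hS, ← Finset.add_sum_erase _ _ hi]; ring
      calc -(μ * (|x i| * (S - |x i|)))
          = ∑ j ∈ I.erase i, -(μ * (|x i| * |x j|)) := by
            rw [← hers]
            simp only [Finset.mul_sum, Finset.sum_neg_distrib]
        _ ≤ _ := Finset.sum_le_sum hterm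
    calc x i ^ 2 - μ * (|x i| * (S - |x i|))
        ≤ x i * x i * (inner ℝ (a i) (a i) : ℝ)
            + ∑ j ∈ I.erase i, x i * x j * (inner ℝ (a i) (a j) : ℝ) := by
          rw [hself]; nlinarith [herase]
      _ = _ := hsplit.symm
  have hsum : Q - μ * (S ^ 2 - Q) ≤ 1 := by
    have h1 : ∑ i ∈ I, (x i ^ 2 - μ * (|x i| * (S - |x i|)))
        ≤ ∑ i ∈ I, ∑ j ∈ I, x i * x j * (inner ℝ (a i) (a j) : ℝ) :=
      Finset.sum_le_sum hrows
    have h2 : ∑ i ∈ I, (x i ^ 2 - μ * (|x i| * (S - |x i|))) = Q - μ * (S ^ 2 - Q) := by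
      rw [Finset.sum_sub_distrib, ← Finset.mul_sum]
      have : ∑ i ∈ I, |x i| * (S - |x i|) = S ^ 2 - Q := by
        have hq : ∀ i, |x i| * |x i| = x i ^ 2 := fun i => by
          rw [← abs_mul, ← sq, abs_sq]
        simp only [mul_sub, Finset.sum_sub_distrib, ← Finset.sum_mul, hq]
        rw [← hS, ← hQ, sq]
      rw [this, ← hQ]
    linarith [hexp, h1, h2.symm.le]
  have hcauchy : S ^ 2 ≤ (k : ℝ) * Q := by
    have h := sq_sum_le_card_mul_sum_sq (s := I) (f := fun i => |x i|)
    have hq : ∑ i ∈ I, |x i| ^ 2 = Q := by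
      refine Finset.sum_congr rfl fun i _ => ?_
      rw [sq_abs]
    rw [hq] at h
    have hcard' : (I.card : ℝ) ≤ (k : ℝ) := by exact_mod_cast hcard
    have hQ0 : 0 ≤ Q := Finset.sum_nonneg fun i _ => sq_nonneg _
    calc S ^ 2 ≤ (I.card : ℝ) * Q := h
      _ ≤ (k : ℝ) * Q := by nlinarith
  rw [le_div_iff₀ hC]
  have hQ0 : 0 ≤ Q := Finset.sum_nonneg fun i _ => sq_nonneg _
  nlinarith [mul_le_mul_of_nonneg_left hsum (by linarith : (0:ℝ) ≤ (k:ℝ)),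
    mul_le_mul_of_nonneg_left hcauchy hμ, hcauchy]

/-- Cross inner product bound. -/
lemma cross_inner_bound {E : Type*} [NormedAddCommGroup E] [InnerProductSpace ℝ E]
    {ι : Type*} (I J : Finset ι) (a : ι → E) (x y : ι → ℝ) (μ : ℝ)
    (hcoh : ∀ i ∈ I, ∀ j ∈ J, |(inner ℝ (a i) (a j) : ℝ)| ≤ μ) :
    |(inner ℝ (∑ i ∈ I, x i • a i) (∑ j ∈ J, y j • a j) : ℝ)|
      ≤ μ * (∑ i ∈ I, |x i|) * (∑ j ∈ J, |y j|) := by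
  have hexp : (inner ℝ (∑ i ∈ I, x i • a i) (∑ j ∈ J, y j • a j) : ℝ)
      = ∑ i ∈ I, ∑ j ∈ J, x i * y j * (inner ℝ (a i) (a j) : ℝ) := by
    rw [sum_inner]
    refine Finset.sum_congr rfl fun i _ => ?_
    rw [inner_sum]
    refine Finset.sum_congr rfl fun j _ => ?_
    rw [real_inner_smul_left, real_inner_smul_right]; ring
  rw [hexp]
  calc |∑ i ∈ I, ∑ j ∈ J, x i * y j * (inner ℝ (a i) (a j) : ℝ)|
      ≤ ∑ i ∈ I, ∑ j ∈ J, |x i * y j * (inner ℝ (a i) (a j) : ℝ)| := by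
        refine (Finset.abs_sum_le_sum_abs _ _).trans (Finset.sum_le_sum fun i _ => ?_)
        exact Finset.abs_sum_le_sum_abs _ _
    _ ≤ ∑ i ∈ I, ∑ j ∈ J, |x i| * |y j| * μ := by
        refine Finset.sum_le_sum fun i hi => Finset.sum_le_sum fun j hj => ?_
        rw [abs_mul, abs_mul]
        exact mul_le_mul_of_nonneg_left (hcoh i hi j hj) (by positivity)
    _ = μ * (∑ i ∈ I, |x i|) * (∑ j ∈ J, |y j|) := by
        simp only [Finset.mul_sum, Finset.sum_mul]
        rw [Finset.sum_comm]
        exact Finset.sum_congr rfl fun i _ => Finset.sum_congr rfl fun j _ => by ring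


/-- The two-block dictionary in `ℝ^{(Fin k ⊕ Fin k) ⊕ Fin 2}`. -/
noncomputable def twoBlockDict (k : ℕ) (α β p q : ℝ) :
    Fin k ⊕ Fin k → EuclideanSpace ℝ ((Fin k ⊕ Fin k) ⊕ Fin 2) :=
  fun s => match s with
  | .inl i => WithLp.toLp 2 (fun z => match z with
      | .inl (.inl j) => α * (if i = j then 1 else 0) - α / k
      | .inl (.inr _) => 0
      | .inr t => if t = 0 then β else 0)
  | .inr i => WithLp.toLp 2 (fun z => match z with
      | .inl (.inl _) => 0
      | .inl (.inr j) => α * (if i = j then 1 else 0) - α / k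
      | .inr t => if t = 0 then p else q)

lemma delta_sum (k : ℕ) (α : ℝ) (i j : Fin k) :
    ∑ l : Fin k, (α * (if i = l then 1 else 0) - α / k) * (α * (if j = l then 1 else 0) - α / k)
      = α ^ 2 * ((if i = j then 1 else 0) - 1 / k) := by
  have hk : (0:ℝ) < k := by exact_mod_cast i.pos
  have h1 : ∀ l : Fin k, (α * (if i = l then 1 else 0) - α / k) * (α * (if j = l then 1 else 0) - α / k)
      = α ^ 2 * ((if i = l then 1 else 0) * (if j = l then 1 else 0))
        - (α ^ 2 / k) * (if i = l then 1 else 0) - (α ^ 2 / k) * (if j = l then 1 else 0)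
        + α ^ 2 / k ^ 2 := fun l => by ring
  have h2 : ∑ l : Fin k, (if i = l then (1:ℝ) else 0) * (if j = l then 1 else 0)
      = (if i = j then (1:ℝ) else 0) := by
    simp only [ite_mul, one_mul, zero_mul]
    rw [Finset.sum_ite_eq]
    simp [eq_comm]
  have h3 : ∑ l : Fin k, (if i = l then (1:ℝ) else 0) = 1 := by
    rw [Finset.sum_ite_eq]; simp
  have h4 : ∑ l : Fin k, (if j = l then (1:ℝ) else 0) = 1 := by
    rw [Finset.sum_ite_eq]; simp
  simp only [h1, Finset.sum_add_distrib, Finset.sum_sub_distrib, ← Finset.mul_sum, h2, h3, h4,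
    Finset.sum_const, Finset.card_univ, Fintype.card_fin, nsmul_eq_mul]
  by_cases h : i = j <;> field_simp [h] <;> ring

section
variable (k : ℕ) (α β p q : ℝ)

lemma euclid_inner_split (f g : EuclideanSpace ℝ ((Fin k ⊕ Fin k) ⊕ Fin 2)) :
    (inner ℝ f g : ℝ) = (∑ i : Fin k, f (.inl (.inl i)) * g (.inl (.inl i)))
      + (∑ i : Fin k, f (.inl (.inr i)) * g (.inl (.inr i)))
      + (f (.inr 0) * g (.inr 0) + f (.inr 1) * g (.inr 1)) := by
  rw [PiLp.inner_apply]
  have hc : ∀ a b : ℝ, inner ℝ a b = a * b := fun a b => by simp [mul_comm]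
  simp only [hc]
  show ∑ x : (Fin k ⊕ Fin k) ⊕ Fin 2, f x * g x = _
  rw [Fintype.sum_sum_type, Fintype.sum_sum_type, Fin.sum_univ_two]

lemma twoBlockDict_inner_ll (i j : Fin k) :
    (inner ℝ (twoBlockDict k α β p q (.inl i)) (twoBlockDict k α β p q (.inl j)) : ℝ)
      = α ^ 2 * ((if i = j then 1 else 0) - 1 / k) + β ^ 2 := by
  rw [euclid_inner_split]
  show (∑ l : Fin k, (α * (if i = l then 1 else 0) - α / k) * (α * (if j = l then 1 else 0) - α / k))
      + (∑ _l : Fin k, (0:ℝ) * 0) + ((β * β) + (0:ℝ) * 0) = _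
  rw [delta_sum]
  simp [sq]

lemma twoBlockDict_inner_rr (i j : Fin k) :
    (inner ℝ (twoBlockDict k α β p q (.inr i)) (twoBlockDict k α β p q (.inr j)) : ℝ)
      = α ^ 2 * ((if i = j then 1 else 0) - 1 / k) + (p ^ 2 + q ^ 2) := by
  rw [euclid_inner_split]
  show (∑ _l : Fin k, (0:ℝ) * 0)
      + (∑ l : Fin k, (α * (if i = l then 1 else 0) - α / k) * (α * (if j = l then 1 else 0) - α / k))
      + ((p * p) + q * q) = _
  rw [delta_sum]
  simp [sq]

lemma twoBlockDict_inner_lr (i j : Fin k) :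
    (inner ℝ (twoBlockDict k α β p q (.inl i)) (twoBlockDict k α β p q (.inr j)) : ℝ) = β * p := by
  rw [euclid_inner_split]
  show (∑ _l : Fin k, (α * (if i = _l then 1 else 0) - α / k) * 0)
      + (∑ _l : Fin k, (0:ℝ) * (α * (if j = _l then 1 else 0) - α / k))
      + ((β * p) + (0:ℝ) * q) = _
  simp

lemma twoBlockDict_inner_rl (i j : Fin k) :
    (inner ℝ (twoBlockDict k α β p q (.inr i)) (twoBlockDict k α β p q (.inl j)) : ℝ) = β * p := by
  rw [euclid_inner_split]
  show (∑ _l : Fin k, (0:ℝ) * (α * (if j = _l then 1 else 0) - α / k))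
      + (∑ _l : Fin k, (α * (if i = _l then 1 else 0) - α / k) * 0)
      + ((p * β) + q * 0) = _
  simp [mul_comm]

end

set_option maxHeartbeats 2000000 in
/-- For every integer `k > 1` and real `0 ≤ u < 1/(k-1)` there is a dictionary `A` whose
coherence is exactly `u` and whose generalized coherence of degree `k` equals
`min(ku/(1-(k-1)u), 1)`; hence the bound `μ_k ≤ kμ/(1-(k-1)μ)` is tight. -/
theorem genCoherence_bound_tight (k : ℕ) (hk : 1 < k) (u : ℝ)
    (hu0 : 0 ≤ u) (hu : u < 1 / ((k : ℝ) - 1)) :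
    ∃ (m N : ℕ) (A : Fin N → EuclideanSpace ℝ (Fin m)),
      (∀ i, ‖A i‖ = 1) ∧
      IsGreatest {r : ℝ | ∃ i j : Fin N, i ≠ j ∧ r = |(inner ℝ (A i) (A j) : ℝ)|} u ∧
      genCoherence A k = min ((k : ℝ) * u / (1 - ((k : ℝ) - 1) * u)) 1 := by
  classical
  have hk1 : (1:ℝ) < k := by exact_mod_cast hk
  have hk0 : (0:ℝ) < k := by linarith
  have hkm1 : (0:ℝ) < (k:ℝ) - 1 := by linarith
  have hC : 0 < 1 - ((k:ℝ) - 1) * u := by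
    have := (lt_div_iff₀ hkm1).mp hu
    nlinarith
  set C : ℝ := 1 - ((k:ℝ) - 1) * u with hCdef
  have hCk : 0 < C / k := div_pos hC hk0
  set c : ℝ := min u (C / k) with hcdef
  have hc0 : 0 ≤ c := le_min hu0 hCk.le
  have hcu : c ≤ u := min_le_left _ _
  have hcCk : c ≤ C / k := min_le_right _ _
  set α : ℝ := Real.sqrt (1 + u) with hαdef
  have hα2 : α ^ 2 = 1 + u := Real.sq_sqrt (by linarith)
  set β : ℝ := Real.sqrt (C / k) with hβdef
  have hβ2 : β ^ 2 = C / k := Real.sq_sqrt hCk.le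
  have hβ0 : 0 < β := Real.sqrt_pos.mpr hCk
  set p : ℝ := c / β with hpdef
  have hβp : β * p = c := by rw [hpdef]; field_simp
  have hp2 : p ^ 2 ≤ C / k := by
    have h1 : p ^ 2 = c ^ 2 / (C / k) := by rw [hpdef, div_pow, hβ2]
    rw [h1, div_le_iff₀ hCk]
    have := mul_le_mul hcCk hcCk hc0 hCk.le
    nlinarith only [this]
  set q : ℝ := Real.sqrt (C / k - p ^ 2) with hqdef
  have hq2 : q ^ 2 = C / k - p ^ 2 := Real.sq_sqrt (by linarith)
  have hpq : p ^ 2 + q ^ 2 = C / k := by rw [hq2]; ring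
  set B := twoBlockDict k α β p q with hBdef
  -- Gram values
  have gll : ∀ i j : Fin k, (inner ℝ (B (.inl i)) (B (.inl j)) : ℝ) = if i = j then 1 else -u := by
    intro i j
    rw [hBdef, twoBlockDict_inner_ll, hα2, hβ2, hCdef]
    by_cases h : i = j <;> simp only [h, if_true, if_false] <;> field_simp <;> ring
  have grr : ∀ i j : Fin k, (inner ℝ (B (.inr i)) (B (.inr j)) : ℝ) = if i = j then 1 else -u := by
    intro i j
    rw [hBdef, twoBlockDict_inner_rr, hα2, hpq, hCdef]
    by_cases h : i = j <;> simp only [h, if_true, if_false] <;> field_simp <;> ring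
  have glr : ∀ i j : Fin k, (inner ℝ (B (.inl i)) (B (.inr j)) : ℝ) = c := by
    intro i j; rw [hBdef, twoBlockDict_inner_lr, hβp]
  have grl : ∀ i j : Fin k, (inner ℝ (B (.inr i)) (B (.inl j)) : ℝ) = c := by
    intro i j; rw [hBdef, twoBlockDict_inner_rl, hβp]
  have hBnorm : ∀ s, ‖B s‖ = 1 := by
    intro s
    have hs : (inner ℝ (B s) (B s) : ℝ) = 1 := by
      cases s with
      | inl i => rw [gll]; simp
      | inr i => rw [grr]; simp
    have h2 : ‖B s‖ ^ 2 = 1 := by rw [← real_inner_self_eq_norm_sq, hs]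
    rw [← Real.sqrt_sq (norm_nonneg (B s)), h2, Real.sqrt_one]
  -- transport to Fin-indexed spaces
  set eI : (Fin k ⊕ Fin k) ⊕ Fin 2 ≃ Fin (k + k + 2) :=
    (Equiv.sumCongr finSumFinEquiv (Equiv.refl (Fin 2))).trans finSumFinEquiv with heI
  set T := LinearIsometryEquiv.piLpCongrLeft 2 ℝ ℝ eI with hT
  set eN : Fin k ⊕ Fin k ≃ Fin (k + k) := finSumFinEquiv with heN
  set A : Fin (k + k) → EuclideanSpace ℝ (Fin (k + k + 2)) :=
    fun i => T (B (eN.symm i)) with hA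
  have hAnorm : ∀ i, ‖A i‖ = 1 := by
    intro i; rw [hA]; rw [LinearIsometryEquiv.norm_map]; exact hBnorm _
  have hAinner : ∀ i j, (inner ℝ (A i) (A j) : ℝ)
      = (inner ℝ (B (eN.symm i)) (B (eN.symm j)) : ℝ) := by
    intro i j; rw [hA]; exact T.inner_map_map _ _
  have hcohA : ∀ i j : Fin (k + k), i ≠ j → |(inner ℝ (A i) (A j) : ℝ)| ≤ u := by
    intro i j hij
    rw [hAinner]
    have hne : eN.symm i ≠ eN.symm j := fun h => hij (eN.symm.injective h)
    rcases hsi : eN.symm i with a | a <;> rcases hsj : eN.symm j with b | b <;>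
      rw [hsi, hsj] at hne
    · have hab : a ≠ b := fun h => hne (by rw [h])
      rw [gll, if_neg hab, abs_neg, abs_of_nonneg hu0]
    · rw [glr, abs_of_nonneg hc0]; exact hcu
    · rw [grl, abs_of_nonneg hc0]; exact hcu
    · have hab : a ≠ b := fun h => hne (by rw [h])
      rw [grr, if_neg hab, abs_neg, abs_of_nonneg hu0]
  -- coherence is exactly u
  have h0k : 0 < k := by omega
  have h1k : 1 < k := hk
  have hgreat : IsGreatest {r : ℝ | ∃ i j : Fin (k+k), i ≠ j ∧ r = |(inner ℝ (A i) (A j) : ℝ)|} u := by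
    constructor
    · refine ⟨eN (.inl ⟨0, h0k⟩), eN (.inl ⟨1, h1k⟩), ?_, ?_⟩
      · intro h
        have := eN.injective h
        simp only [Sum.inl.injEq, Fin.mk.injEq] at this
        omega
      · have h01 : (⟨0, h0k⟩ : Fin k) ≠ ⟨1, h1k⟩ := by
          intro h; simpa using congrArg Fin.val h
        rw [hAinner]
        simp only [Equiv.symm_apply_apply]
        rw [gll, if_neg h01, abs_neg, abs_of_nonneg hu0]
    · rintro r ⟨i, j, hij, rfl⟩
      exact hcohA i j hij
  -- sums of blocks
  have hrow : ∀ i : Fin k, ∑ j : Fin k, (if i = j then (1:ℝ) else -u) = 1 - ((k:ℝ)-1) * u := by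
    intro i
    have hsplit : ∀ j : Fin k, (if i = j then (1:ℝ) else -u)
        = (if i = j then (1+u:ℝ) else 0) + (-u) := fun j => by
      by_cases h : i = j <;> simp [h]
    simp only [hsplit, Finset.sum_add_distrib, Finset.sum_ite_eq, Finset.mem_univ, if_true,
      Finset.sum_const, Finset.card_univ, Fintype.card_fin, nsmul_eq_mul]
    ring
  set SL := ∑ i : Fin k, B (.inl i) with hSL
  set SR := ∑ i : Fin k, B (.inr i) with hSR
  have hinnerLL : (inner ℝ SL SL : ℝ) = (k:ℝ) * C := by
    rw [hSL, sum_inner]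
    have : ∀ i ∈ Finset.univ, (inner ℝ (B (Sum.inl i)) (∑ j : Fin k, B (.inl j)) : ℝ)
        = 1 - ((k:ℝ)-1) * u := by
      intro i _
      rw [inner_sum]
      calc ∑ j : Fin k, (inner ℝ (B (Sum.inl i)) (B (Sum.inl j)) : ℝ)
          = ∑ j : Fin k, (if i = j then (1:ℝ) else -u) :=
            Finset.sum_congr rfl fun j _ => gll i j
        _ = 1 - ((k:ℝ)-1) * u := hrow i
    rw [Finset.sum_congr rfl this, Finset.sum_const, Finset.card_univ, Fintype.card_fin,
      nsmul_eq_mul, hCdef]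
  have hinnerRR : (inner ℝ SR SR : ℝ) = (k:ℝ) * C := by
    rw [hSR, sum_inner]
    have : ∀ i ∈ Finset.univ, (inner ℝ (B (Sum.inr i)) (∑ j : Fin k, B (.inr j)) : ℝ)
        = 1 - ((k:ℝ)-1) * u := by
      intro i _
      rw [inner_sum]
      calc ∑ j : Fin k, (inner ℝ (B (Sum.inr i)) (B (Sum.inr j)) : ℝ)
          = ∑ j : Fin k, (if i = j then (1:ℝ) else -u) :=
            Finset.sum_congr rfl fun j _ => grr i j
        _ = 1 - ((k:ℝ)-1) * u := hrow i
    rw [Finset.sum_congr rfl this, Finset.sum_const, Finset.card_univ, Fintype.card_fin,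
      nsmul_eq_mul, hCdef]
  have hinnerLR : (inner ℝ SL SR : ℝ) = (k:ℝ) * ((k:ℝ) * c) := by
    rw [hSL, hSR, sum_inner]
    have : ∀ i ∈ Finset.univ, (inner ℝ (B (Sum.inl i)) (∑ j : Fin k, B (.inr j)) : ℝ)
        = (k:ℝ) * c := by
      intro i _
      rw [inner_sum]
      rw [Finset.sum_congr rfl fun j _ => glr i j, Finset.sum_const, Finset.card_univ,
        Fintype.card_fin, nsmul_eq_mul]
    rw [Finset.sum_congr rfl this, Finset.sum_const, Finset.card_univ, Fintype.card_fin,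
      nsmul_eq_mul]
  -- the witness index sets
  set I : Finset (Fin (k+k)) := Finset.image (fun i : Fin k => eN (.inl i)) Finset.univ with hI
  set J : Finset (Fin (k+k)) := Finset.image (fun i : Fin k => eN (.inr i)) Finset.univ with hJ
  have hIinj : Function.Injective (fun i : Fin k => eN (.inl i)) :=
    fun a b h => by simpa using eN.injective h
  have hJinj : Function.Injective (fun i : Fin k => eN (.inr i)) :=
    fun a b h => by simpa using eN.injective h
  have hIcard : I.card = k := by
    rw [hI, Finset.card_image_of_injective _ hIinj]; simp
  have hJcard : J.card = k := by
    rw [hJ, Finset.card_image_of_injective _ hJinj]; simp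
  have hdisj : Disjoint I J := by
    rw [Finset.disjoint_left]
    rintro x hx hy
    rw [hI, Finset.mem_image] at hx
    rw [hJ, Finset.mem_image] at hy
    obtain ⟨a, -, ha⟩ := hx
    obtain ⟨b, -, hb⟩ := hy
    have := eN.injective (ha.trans hb.symm)
    simp at this
  have hsumI : ∑ i ∈ I, A i = T SL := by
    rw [hI, Finset.sum_image (fun a _ b _ h => hIinj h), hSL, map_sum]
    exact Finset.sum_congr rfl fun i _ => by simp only [hA, Equiv.symm_apply_apply]
  have hsumJ : ∑ j ∈ J, A j = T SR := by
    rw [hJ, Finset.sum_image (fun a _ b _ h => hJinj h), hSR, map_sum]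
    exact Finset.sum_congr rfl fun i _ => by simp only [hA, Equiv.symm_apply_apply]
  set r0 : ℝ := (Real.sqrt ((k:ℝ) * C))⁻¹ with hr0
  have hkC : 0 < (k:ℝ) * C := mul_pos hk0 hC
  have hsqkC : 0 < Real.sqrt ((k:ℝ)*C) := Real.sqrt_pos.mpr hkC
  set w0 := r0 • ∑ i ∈ I, A i with hw0
  set v0 := r0 • ∑ j ∈ J, A j with hv0
  have hnormSL : ‖SL‖ = Real.sqrt ((k:ℝ)*C) := by
    have h2 : ‖SL‖^2 = (k:ℝ)*C := by rw [← real_inner_self_eq_norm_sq, hinnerLL]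
    rw [← Real.sqrt_sq (norm_nonneg SL), h2]
  have hnormSR : ‖SR‖ = Real.sqrt ((k:ℝ)*C) := by
    have h2 : ‖SR‖^2 = (k:ℝ)*C := by rw [← real_inner_self_eq_norm_sq, hinnerRR]
    rw [← Real.sqrt_sq (norm_nonneg SR), h2]
  have hw0norm : ‖w0‖ = 1 := by
    rw [hw0, hsumI, norm_smul, LinearIsometryEquiv.norm_map, hnormSL, hr0, Real.norm_eq_abs,
      abs_of_nonneg (inv_nonneg.mpr hsqkC.le)]
    field_simp
  have hv0norm : ‖v0‖ = 1 := by
    rw [hv0, hsumJ, norm_smul, LinearIsometryEquiv.norm_map, hnormSR, hr0, Real.norm_eq_abs,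
      abs_of_nonneg (inv_nonneg.mpr hsqkC.le)]
    field_simp
  have hval : (inner ℝ w0 v0 : ℝ) = (k:ℝ) * c / C := by
    rw [hw0, hv0, hsumI, hsumJ, real_inner_smul_left, real_inner_smul_right,
      T.inner_map_map, hinnerLR, hr0]
    have hmm : (Real.sqrt ((k:ℝ)*C))⁻¹ * ((Real.sqrt ((k:ℝ)*C))⁻¹ * ((k:ℝ)*((k:ℝ)*c)))
        = ((k:ℝ)*C)⁻¹ * ((k:ℝ)*((k:ℝ)*c)) := by
      rw [← mul_assoc, ← mul_inv, Real.mul_self_sqrt hkC.le]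
    rw [hmm]
    field_simp
  have hvalmin : (k:ℝ) * c / C = min ((k:ℝ)*u / C) 1 := by
    rcases le_total u (C / k) with h | h
    · rw [hcdef, min_eq_left h, min_eq_left]
      rw [div_le_one hC]
      have := (le_div_iff₀ hk0).mp h
      linarith only [this]
    · rw [hcdef, min_eq_right h, min_eq_right]
      · field_simp
      · rw [le_div_iff₀ hC]
        have := (div_le_iff₀ hk0).mp h
        linarith only [this]
  have hspanI : w0 ∈ Submodule.span ℝ (A '' ↑I) := Submodule.smul_mem _ _
    (Submodule.sum_mem _ fun i hi => Submodule.subset_span ⟨i, Finset.mem_coe.mpr hi, rfl⟩)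
  have hspanJ : v0 ∈ Submodule.span ℝ (A '' ↑J) := Submodule.smul_mem _ _
    (Submodule.sum_mem _ fun i hi => Submodule.subset_span ⟨i, Finset.mem_coe.mpr hi, rfl⟩)
  have habsval : |(inner ℝ w0 v0 : ℝ)| = (k:ℝ)*c/C := by
    rw [hval]
    exact abs_of_nonneg (div_nonneg (mul_nonneg hk0.le hc0) hC.le)
  have hgen : IsGreatest {r : ℝ | ∃ I' J' : Finset (Fin (k+k)), I'.card ≤ k ∧ J'.card ≤ k ∧
      Disjoint I' J' ∧ ∃ w ∈ Submodule.span ℝ (A '' I'), ∃ v ∈ Submodule.span ℝ (A '' J'),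
      ‖w‖ = 1 ∧ ‖v‖ = 1 ∧ r = |(inner ℝ w v : ℝ)|} (min ((k:ℝ)*u/C) 1) := by
    constructor
    · exact ⟨I, J, hIcard.le, hJcard.le, hdisj, w0, hspanI, v0, hspanJ, hw0norm, hv0norm,
        by rw [habsval, hvalmin]⟩
    · rintro r ⟨I', J', hI'c, hJ'c, hIJ', w, hw, v, hv, hnw, hnv, rfl⟩
      obtain ⟨x, rfl⟩ := span_image_rep hw
      obtain ⟨y, rfl⟩ := span_image_rep hv
      refine le_min ?_ ?_
      · have hSx := l1_sq_bound I' A x u k hu0 hk1.le hI'c hC (fun i _ => hAnorm i)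
          (fun i _ j _ hij => hcohA i j hij) hnw
        have hSy := l1_sq_bound J' A y u k hu0 hk1.le hJ'c hC (fun i _ => hAnorm i)
          (fun i _ j _ hij => hcohA i j hij) hnv
        have hcross := cross_inner_bound I' J' A x y u
          (fun i hi j hj => hcohA i j (fun h => (Finset.disjoint_left.mp hIJ' hi (h ▸ hj))))
        have hSx0 : 0 ≤ ∑ i ∈ I', |x i| := Finset.sum_nonneg fun _ _ => abs_nonneg _
        have hSy0 : 0 ≤ ∑ j ∈ J', |y j| := Finset.sum_nonneg fun _ _ => abs_nonneg _
        have hxy : (∑ i ∈ I', |x i|) * (∑ j ∈ J', |y j|) ≤ (k:ℝ) / C := by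
          linarith only [hSx, hSy,
            sq_nonneg ((∑ i ∈ I', |x i|) - (∑ j ∈ J', |y j|))]
        refine le_trans hcross ?_
        have h2 := mul_le_mul_of_nonneg_left hxy hu0
        have h3 : (u * ∑ i ∈ I', |x i|) * ∑ j ∈ J', |y j|
            = u * ((∑ i ∈ I', |x i|) * ∑ j ∈ J', |y j|) := by ring
        have h4 : (k:ℝ) * u / C = u * ((k:ℝ) / C) := by ring
        rw [h3, h4]
        exact h2
      · refine le_trans (abs_real_inner_le_norm _ _) ?_
        exact le_of_eq (by rw [hnw, hnv, one_mul])
  refine ⟨k + k + 2, k + k, A, hAnorm, hgreat, ?_⟩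
  unfold genCoherence
  exact hgen.csSup_eq
end
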